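/- Let f(z) = z + ∑_{k=2}^∞ a_k z^k be analytic on the unit disk with real coefficients, and suppose |f(z)/z − 1| < 1 for all z in the unit disk D. Then f is univalent and starlike in the disk {z : |z| < 1/2}. -/

import Mathlib

open Metric Set Complex

section mcgregorHelpers

lemma mobius_normSq (a z : ℂ) :
    normSq (1 - (starRingEnd ℂ) a * z) - normSq (z - a) = (1 - normSq a) * (1 - normSq z) := by
  simp only [normSq_apply, Complex.sub_re, Complex.sub_im, Complex.mul_re, Complex.mul_im,
    Complex.conj_re, Complex.conj_im, Complex.one_re, Complex.one_im]
  ring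

lemma mobius_den_ne {a z : ℂ} (ha : normSq a < 1) (hz : normSq z < 1) :
    1 - (starRingEnd ℂ) a * z ≠ 0 := by
  intro h
  have h1 := mobius_normSq a z
  rw [h, map_zero] at h1
  nlinarith [normSq_nonneg (z - a)]

lemma mobius_maps {a z : ℂ} (ha : normSq a < 1) (hz : normSq z < 1) :
    ‖(z - a) / (1 - (starRingEnd ℂ) a * z)‖ < 1 := by
  rw [norm_div, div_lt_one (by
    simpa [norm_pos_iff] using mobius_den_ne ha hz),
    Complex.norm_def, Complex.norm_def]
  refine Real.sqrt_lt_sqrt (normSq_nonneg _) ?_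
  nlinarith [mobius_normSq a z]

lemma normSq_lt_one_of_mem {z : ℂ} (hz : z ∈ ball (0:ℂ) 1) : normSq z < 1 := by
  rw [mem_ball_zero_iff] at hz
  have : ‖z‖ < 1 := hz
  nlinarith [Complex.sq_norm z, norm_nonneg z]

/-- Schwarz–Pick derivative inequality. -/
lemma schwarz_pick {w : ℂ → ℂ} (hd : DifferentiableOn ℂ w (ball 0 1))
    (hm : MapsTo w (ball 0 1) (ball 0 1)) {z₀ : ℂ} (hz₀ : z₀ ∈ ball (0:ℂ) 1) :
    ‖deriv w z₀‖ * (1 - normSq z₀) ≤ 1 - normSq (w z₀) := by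
  have hzn : normSq z₀ < 1 := normSq_lt_one_of_mem hz₀
  set w₀ := w z₀ with hw₀
  have hwn : normSq w₀ < 1 := normSq_lt_one_of_mem (hm hz₀)
  set φ : ℂ → ℂ := fun ζ => (ζ - (-z₀)) / (1 - (starRingEnd ℂ) (-z₀) * ζ) with hφ
  set ψ : ℂ → ℂ := fun ω => (ω - w₀) / (1 - (starRingEnd ℂ) w₀ * ω) with hψ
  set g : ℂ → ℂ := fun ζ => ψ (w (φ ζ)) with hg
  have hzn' : normSq (-z₀) < 1 := by simpa using hzn
  have hφmem : ∀ ζ ∈ ball (0:ℂ) 1, φ ζ ∈ ball (0:ℂ) 1 := by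
    intro ζ hζ
    rw [mem_ball_zero_iff]
    exact mobius_maps hzn' (normSq_lt_one_of_mem hζ)
  have hgmem : MapsTo g (ball (0:ℂ) 1) (ball (0:ℂ) 1) := by
    intro ζ hζ
    rw [mem_ball_zero_iff]
    exact mobius_maps hwn (normSq_lt_one_of_mem (hm (hφmem ζ hζ)))
  have hφ0 : φ 0 = z₀ := by simp [hφ]
  have hg0 : g 0 = 0 := by simp [hg, hφ0, hψ, hw₀]
  -- derivative of φ at 0
  have hφd : HasDerivAt φ (1 - normSq z₀) 0 := by
    have h1 : HasDerivAt (fun ζ : ℂ => ζ - (-z₀)) 1 0 := (hasDerivAt_id 0).sub_const _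
    have h2 : HasDerivAt (fun ζ : ℂ => 1 - (starRingEnd ℂ) (-z₀) * ζ)
        (-((starRingEnd ℂ) (-z₀))) 0 := by
      simpa using ((hasDerivAt_id (0:ℂ)).const_mul ((starRingEnd ℂ) (-z₀))).const_sub 1
    have hden : (1 : ℂ) - (starRingEnd ℂ) (-z₀) * 0 ≠ 0 := by simp
    have : HasDerivAt φ _ 0 := h1.div h2 hden
    convert this using 1
    have : ((starRingEnd ℂ) z₀) * z₀ = (normSq z₀ : ℂ) := by
      rw [mul_comm, Complex.mul_conj]
    field_simp
    rw [← this, map_neg]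
    ring
  -- derivative of ψ at w₀
  have hψd : HasDerivAt ψ (1 / (1 - (normSq w₀ : ℂ))) w₀ := by
    have h1 : HasDerivAt (fun ω : ℂ => ω - w₀) 1 w₀ := (hasDerivAt_id _).sub_const _
    have h2 : HasDerivAt (fun ω : ℂ => 1 - (starRingEnd ℂ) w₀ * ω)
        (-((starRingEnd ℂ) w₀)) w₀ := by
      simpa using ((hasDerivAt_id (w₀:ℂ)).const_mul ((starRingEnd ℂ) w₀)).const_sub 1
    have hcm : ((starRingEnd ℂ) w₀) * w₀ = (normSq w₀ : ℂ) := by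
      rw [mul_comm, Complex.mul_conj]
    have hden : (1 : ℂ) - (starRingEnd ℂ) w₀ * w₀ ≠ 0 := by
      rw [hcm]
      intro h
      have : (normSq w₀ : ℂ) = 1 := by linear_combination -h
      have := congrArg Complex.re this
      simp at this
      linarith
    have hc : (1:ℂ) - (normSq w₀ : ℂ) ≠ 0 := by rwa [hcm] at hden
    have : HasDerivAt ψ _ w₀ := h1.div h2 hden
    convert this using 1
    rw [hcm]
    simp only [sub_self, zero_mul, mul_zero, one_mul, sub_zero, neg_mul, mul_neg, sub_neg_eq_add, zero_add, add_zero]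
    rw [sq, div_mul_eq_div_div, div_self hc]
  have hwd : DifferentiableAt ℂ w z₀ := hd.differentiableAt (isOpen_ball.mem_nhds hz₀)
  have hwd' : HasDerivAt w (deriv w z₀) z₀ := hwd.hasDerivAt
  -- g differentiable on ball
  have hgd : DifferentiableOn ℂ g (ball (0:ℂ) 1) := by
    intro ζ hζ
    have hζn : normSq ζ < 1 := normSq_lt_one_of_mem hζ
    have hφdiff : DifferentiableAt ℂ φ ζ := by
      apply DifferentiableAt.div
      · exact (differentiableAt_id.sub_const _)
      · exact (differentiableAt_const _).sub ((differentiableAt_const _).mul differentiableAt_id)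
      · exact mobius_den_ne hzn' hζn
    have hwdiff : DifferentiableAt ℂ w (φ ζ) :=
      hd.differentiableAt (isOpen_ball.mem_nhds (hφmem ζ hζ))
    have hψdiff : DifferentiableAt ℂ ψ (w (φ ζ)) := by
      apply DifferentiableAt.div
      · exact (differentiableAt_id.sub_const _)
      · exact (differentiableAt_const _).sub ((differentiableAt_const _).mul differentiableAt_id)
      · exact mobius_den_ne hwn (normSq_lt_one_of_mem (hm (hφmem ζ hζ)))
    exact ((hψdiff.comp ζ (hwdiff.comp ζ hφdiff))).differentiableWithinAt
  -- chain rule at 0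
  have hwφ : HasDerivAt (fun ζ => w (φ ζ)) (deriv w z₀ * (1 - normSq z₀)) 0 := by
    have hwd2 : HasDerivAt w (deriv w z₀) (φ 0) := by rw [hφ0]; exact hwd'
    exact hwd2.comp 0 hφd
  have hgd0 : HasDerivAt g (1 / (1 - (normSq w₀ : ℂ)) * (deriv w z₀ * (1 - normSq z₀))) 0 := by
    have hψd2 : HasDerivAt ψ (1 / (1 - (normSq w₀ : ℂ))) (w (φ 0)) := by rw [hφ0]; exact hψd
    exact hψd2.comp 0 hwφ
  have hle : ‖deriv g 0‖ ≤ 1 :=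
    Complex.norm_deriv_le_one_of_mapsTo_ball hgd (by rw [hg0]; exact hgmem.mono_right ball_subset_closedBall) one_pos
  rw [hgd0.deriv] at hle
  rw [norm_mul, norm_mul, norm_div, norm_one] at hle
  have e1 : ‖(1 : ℂ) - (normSq w₀ : ℂ)‖ = 1 - normSq w₀ := by
    rw [show (1:ℂ) - (normSq w₀:ℂ) = ((1 - normSq w₀ : ℝ) : ℂ) by push_cast; ring,
      Complex.norm_of_nonneg (by linarith)]
  have e2 : ‖(1 : ℂ) - (normSq z₀ : ℂ)‖ = 1 - normSq z₀ := by
    rw [show (1:ℂ) - (normSq z₀:ℂ) = ((1 - normSq z₀ : ℝ) : ℂ) by push_cast; ring,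
      Complex.norm_of_nonneg (by linarith)]
  rw [e1, e2] at hle
  rw [div_mul_eq_mul_div, one_mul, div_le_one (by linarith)] at hle
  linarith
end mcgregorHelpers

/-- McGregor's lemma. -/
theorem mcgregor_starlike (f : ℂ → ℂ)
    (hf : AnalyticOn ℂ f (Metric.ball (0 : ℂ) 1))
    (hf0 : f 0 = 0) (hf1 : deriv f 0 = 1)
    (hreal : ∀ k : ℕ, (iteratedDeriv k f 0).im = 0)
    (hbound : ∀ z : ℂ, ‖z‖ < 1 → z ≠ 0 → ‖f z / z - 1‖ < 1) :
    Set.InjOn f (Metric.ball (0 : ℂ) (1 / 2)) ∧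
      ∀ z : ℂ, ‖z‖ < 1 / 2 → z ≠ 0 →
        0 < (z * deriv f z / f z).re := by
  have hfd : DifferentiableOn ℂ f (Metric.ball (0:ℂ) 1) := hf.differentiableOn
  have hds : DifferentiableOn ℂ (dslope f 0) (Metric.ball (0:ℂ) 1) :=
    (differentiableOn_dslope (ball_mem_nhds 0 one_pos)).mpr hfd
  set w : ℂ → ℂ := fun z => dslope f 0 z - 1 with hwdef
  have hwdOn : DifferentiableOn ℂ w (ball (0:ℂ) 1) := hds.sub_const 1
  have hw0 : w 0 = 0 := by simp [hwdef, dslope_same, hf1]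
  have hwf : ∀ z : ℂ, f z = z + z * w z := by
    intro z
    by_cases hz : z = 0
    · simp [hz, hf0]
    · rw [hwdef]
      simp only
      rw [dslope_of_ne f hz, slope_def_field, hf0]
      field_simp
      ring
  have hwlt : ∀ z ∈ ball (0:ℂ) 1, ‖w z‖ < 1 := by
    intro z hz
    by_cases h0 : z = 0
    · simp [h0, hw0]
    · rw [mem_ball_zero_iff] at hz
      have := hbound z hz h0
      rw [hwdef]
      simp only
      rwa [dslope_of_ne f h0, slope_def_field, hf0, sub_zero, sub_zero]
  have hm : MapsTo w (ball (0:ℂ) 1) (ball (0:ℂ) 1) := by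
    intro z hz; rw [mem_ball_zero_iff]; exact hwlt z hz
  have hschwarz : ∀ z : ℂ, ‖z‖ < 1 → ‖w z‖ ≤ ‖z‖ :=
    fun z hz => Complex.norm_le_norm_of_mapsTo_ball hwdOn (hm.mono_right ball_subset_closedBall) hw0 hz
  -- derivative of w at points of the ball
  have hwAt : ∀ z ∈ ball (0:ℂ) 1, HasDerivAt w (deriv w z) z := fun z hz =>
    (hwdOn.differentiableAt (isOpen_ball.mem_nhds hz)).hasDerivAt
  have hfun : f = fun z => z + z * w z := funext hwf
  have hF : ∀ z ∈ ball (0:ℂ) 1, HasDerivAt f (1 + (1 * w z + z * deriv w z)) z := by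
    intro z hz
    rw [hfun]
    exact (hasDerivAt_id z).add ((hasDerivAt_id z).mul (hwAt z hz))
  -- Schwarz–Pick in abs form
  have hSP : ∀ z ∈ ball (0:ℂ) 1,
      ‖deriv w z‖ * (1 - (‖z‖)^2) ≤ 1 - (‖w z‖)^2 := by
    intro z hz
    have := schwarz_pick hwdOn hm hz
    rwa [← Complex.sq_norm, ← Complex.sq_norm (w z)] at this
  constructor
  · -- injectivity
    intro z₁ hz₁ z₂ hz₂ hfe
    rw [mem_ball_zero_iff] at hz₁ hz₂
    set ρ : ℝ := max (‖z₁‖) (‖z₂‖) with hρdef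
    have hρ : ρ < 1/2 := max_lt hz₁ hz₂
    have hρ0 : 0 ≤ ρ := le_trans (norm_nonneg _) (le_max_left _ _)
    set u : ℂ → ℂ := fun z => z * w z with hudef
    have hsub : closedBall (0:ℂ) ρ ⊆ ball (0:ℂ) 1 := by
      apply closedBall_subset_ball; linarith
    have hud : ∀ x ∈ closedBall (0:ℂ) ρ,
        HasDerivWithinAt u (w x + x * deriv w x) (closedBall (0:ℂ) ρ) x := by
      intro x hx
      exact (((hasDerivAt_id x).mul (hwAt x (hsub hx))).congr_deriv
        (by simp only [id_eq]; ring)).hasDerivWithinAt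
    have hbd : ∀ x ∈ closedBall (0:ℂ) ρ, ‖w x + x * deriv w x‖ ≤ 2 * ρ := by
      intro x hx
      have hx1 : x ∈ ball (0:ℂ) 1 := hsub hx
      have hr : ‖x‖ ≤ ρ := by rwa [mem_closedBall, dist_zero_right] at hx
      have ht : ‖w x‖ ≤ ‖x‖ :=
        hschwarz x (by rw [mem_ball_zero_iff] at hx1; exact hx1)
      have hsp := hSP x hx1
      have h0s : 0 ≤ ‖deriv w x‖ := norm_nonneg _
      have h0t : 0 ≤ ‖w x‖ := norm_nonneg _
      have h0r : 0 ≤ ‖x‖ := norm_nonneg _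
      calc ‖w x + x * deriv w x‖
          ≤ ‖w x‖ + ‖x * deriv w x‖ := norm_add_le _ _
        _ = ‖w x‖ + ‖x‖ * ‖deriv w x‖ := by
            simp
        _ ≤ 2 * ρ := by
            have hrlt : ‖x‖ < 1/2 := lt_of_le_of_lt hr hρ
            have hpos : (0:ℝ) < 1 - (‖x‖)^2 := by nlinarith
            have h2 : ‖x‖ * (‖deriv w x‖ * (1 - (‖x‖)^2))
                ≤ ‖x‖ * (1 - (‖w x‖)^2) :=
              mul_le_mul_of_nonneg_left hsp h0r
            nlinarith [h2, hpos,
              mul_nonneg (sub_nonneg.mpr ht)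
                (show (0:ℝ) ≤ 1 - ‖x‖ * ‖w x‖ - 2*(‖x‖)^2 by nlinarith),
              mul_nonneg (sub_nonneg.mpr hr) hpos.le]
    have hmv := (convex_closedBall (0:ℂ) ρ).norm_image_sub_le_of_norm_hasDerivWithin_le
      hud hbd (x := z₂) (y := z₁)
      (by rw [mem_closedBall, dist_zero_right]; exact le_max_right _ _)
      (by rw [mem_closedBall, dist_zero_right]; exact le_max_left _ _)
    -- f z₁ = f z₂ gives z₁ - z₂ = u z₂ - u z₁
    have hzz : z₁ - z₂ = u z₂ - u z₁ := by
      have h1 := hwf z₁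
      have h2 := hwf z₂
      rw [hfe] at h1
      rw [h1] at h2
      rw [hudef]
      simp only
      linear_combination h2
    by_contra hne
    have hpos : 0 < ‖z₁ - z₂‖ := by
      rw [norm_pos_iff]; exact sub_ne_zero.mpr hne
    have : ‖z₁ - z₂‖ ≤ 2 * ρ * ‖z₁ - z₂‖ := by
      calc ‖z₁ - z₂‖ = ‖u z₁ - u z₂‖ := by
            rw [show u z₁ - u z₂ = -(z₁ - z₂) by rw [hzz]; ring, norm_neg]
        _ ≤ 2 * ρ * ‖z₁ - z₂‖ := hmv
    nlinarith
  · -- starlike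
    intro z hz hz0
    have hz1 : z ∈ ball (0:ℂ) 1 := by
      rw [mem_ball_zero_iff]; linarith
    have hr1 : ‖z‖ < 1 := by linarith
    have ht : ‖w z‖ ≤ ‖z‖ := hschwarz z hr1
    have htlt : ‖w z‖ < 1 := hwlt z hz1
    have hne : (1 : ℂ) + w z ≠ 0 := by
      intro h
      have : w z = -1 := by linear_combination h
      rw [this] at htlt
      simp at htlt
    have hfz : f z = z * (1 + w z) := by rw [hwf z]; ring
    have hfne : f z ≠ 0 := by rw [hfz]; exact mul_ne_zero hz0 hne
    have hdf : deriv f z = 1 + (1 * w z + z * deriv w z) := (hF z hz1).deriv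
    have key : z * deriv f z / f z = 1 + z * deriv w z / (1 + w z) := by
      rw [hdf, hfz]
      field_simp
      ring
    have hsp := hSP z hz1
    have h0s : 0 ≤ ‖deriv w z‖ := norm_nonneg _
    have h0t : 0 ≤ ‖w z‖ := norm_nonneg _
    have h0r : 0 ≤ ‖z‖ := norm_nonneg _
    have hlow : 1 - ‖w z‖ ≤ ‖1 + w z‖ := by
      have h := norm_add_le (1 + w z) (-w z)
      have e : (1 + w z) + -w z = 1 := by ring
      rw [e, norm_one, norm_neg] at h
      linarith
    have hnum : ‖z‖ * ‖deriv w z‖ < 1 - ‖w z‖ := by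
      have hpos : (0:ℝ) < 1 - (‖z‖)^2 := by nlinarith
      have h2 : ‖z‖ * (‖deriv w z‖ * (1 - (‖z‖)^2))
          ≤ ‖z‖ * (1 - (‖w z‖)^2) :=
        mul_le_mul_of_nonneg_left hsp h0r
      nlinarith [h2, hpos,
        mul_pos (sub_pos.mpr htlt)
          (show (0:ℝ) < 1 - ‖z‖ - 2*(‖z‖)^2 by nlinarith),
        mul_nonneg (sub_nonneg.mpr ht) (mul_nonneg h0r (sub_pos.mpr htlt).le)]
    have habsu : ‖z * deriv w z / (1 + w z)‖ < 1 := by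
      rw [norm_div, norm_mul]
      rw [div_lt_one (norm_pos_iff.mpr hne)]
      calc ‖z‖ * ‖deriv w z‖ < 1 - ‖w z‖ := hnum
        _ ≤ ‖1 + w z‖ := hlow
    rw [key, Complex.add_re, Complex.one_re]
    have hre : |(z * deriv w z / (1 + w z)).re| < 1 :=
      lt_of_le_of_lt (Complex.abs_re_le_norm _) habsu
    have := abs_lt.mp hre
    linarith [this.1]
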